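/- Fix L > 0 and a positive integer P. Define f : [1, ∞) → ℝ by f(α) = α·[(L/P + 1)² + L²/P² − 2(L/P)(L/P + 1)(1 − α^{-1})^{P/2}]. Then: (i) if P = 1, f is convex; (ii) if P = 2, f is affine (linear); (iii) if P ≥ 3, f is concave. -/

import Mathlib

open Set

private lemma hasDerivAt_g (p C K : ℝ) {x : ℝ} (hx : 1 < x) :
    HasDerivAt (fun α : ℝ => α * (C - K * (1 - α⁻¹) ^ p))
      (C - K * ((1 - x⁻¹) ^ p + p * (1 - x⁻¹) ^ (p - 1) * x⁻¹)) x := by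
  have hx0 : x ≠ 0 := by positivity
  have hb : 0 < 1 - x⁻¹ := by
    have : x⁻¹ < 1 := inv_lt_one_of_one_lt₀ hx
    linarith
  have h1 : HasDerivAt (fun α : ℝ => 1 - α⁻¹) (x ^ 2)⁻¹ x := by
    have := (hasDerivAt_inv hx0).const_sub 1
    simpa using this
  have h2 := h1.rpow_const (p := p) (Or.inl hb.ne')
  have h3 := ((h2.const_mul K).const_sub C)
  have h4 := (hasDerivAt_id x).mul h3
  convert h4 using 1
  · rfl
  · rfl
  · rfl
  simp only [id]
  field_simp
  ring

private lemma hasDerivAt_g' (p C K : ℝ) {x : ℝ} (hx : 1 < x) :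
    HasDerivAt (fun α : ℝ => C - K * ((1 - α⁻¹) ^ p + p * (1 - α⁻¹) ^ (p - 1) * α⁻¹))
      (-(K * (p * (p - 1)) * (1 - x⁻¹) ^ (p - 2) * (x ^ 3)⁻¹)) x := by
  have hx0 : x ≠ 0 := by positivity
  have hb : 0 < 1 - x⁻¹ := by
    have : x⁻¹ < 1 := inv_lt_one_of_one_lt₀ hx
    linarith
  have h1 : HasDerivAt (fun α : ℝ => 1 - α⁻¹) (x ^ 2)⁻¹ x := by
    have := (hasDerivAt_inv hx0).const_sub 1
    simpa using this
  have hA := h1.rpow_const (p := p) (Or.inl hb.ne')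
  have hB1 := h1.rpow_const (p := p - 1) (Or.inl hb.ne')
  have hB := ((hB1.mul (hasDerivAt_inv hx0)).const_mul p)
  have h := ((hA.add hB).const_mul K).const_sub C
  convert h using 1
  · rfl
  · rfl
  · funext y; simp only [Pi.add_apply, Pi.mul_apply]; ring
  · rw [show p - 1 - 1 = p - 2 by ring]
    field_simp
    ring

private lemma key (p C K : ℝ) (hp : 0 < p) :
    ContinuousOn (fun α : ℝ => α * (C - K * (1 - α⁻¹) ^ p)) (Ici 1) ∧
    (∀ x ∈ interior (Ici (1:ℝ)),
      HasDerivWithinAt (fun α : ℝ => α * (C - K * (1 - α⁻¹) ^ p))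
        ((fun x : ℝ => C - K * ((1 - x⁻¹) ^ p + p * (1 - x⁻¹) ^ (p - 1) * x⁻¹)) x)
        (interior (Ici (1:ℝ))) x) ∧
    (∀ x ∈ interior (Ici (1:ℝ)),
      HasDerivWithinAt (fun x : ℝ => C - K * ((1 - x⁻¹) ^ p + p * (1 - x⁻¹) ^ (p - 1) * x⁻¹))
        ((fun x : ℝ => -(K * (p * (p - 1)) * (1 - x⁻¹) ^ (p - 2) * (x ^ 3)⁻¹)) x)
        (interior (Ici (1:ℝ))) x) := by
  refine ⟨?_, ?_, ?_⟩
  · have hcont : ContinuousOn (fun α : ℝ => (1 - α⁻¹) ^ p) (Ici 1) := by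
      apply ContinuousOn.rpow_const
      · exact (continuousOn_const.sub (continuousOn_inv₀.mono fun x hx => by
          have : (1:ℝ) ≤ x := hx
          simp only [mem_compl_iff, mem_singleton_iff]
          intro h; rw [h] at this; linarith))
      · intro x _; exact Or.inr hp.le
    exact continuousOn_id.mul (continuousOn_const.sub (hcont.const_smul K))
  · intro x hx
    rw [interior_Ici] at hx
    exact ((hasDerivAt_g p C K hx).hasDerivWithinAt)
  · intro x hx
    rw [interior_Ici] at hx
    exact ((hasDerivAt_g' p C K hx).hasDerivWithinAt)

theorem f_convexity_cases (L : ℝ) (hL : 0 < L) (P : ℕ) (hP : 0 < P) :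
    (P = 1 → ConvexOn ℝ (Set.Ici (1 : ℝ))
      (fun α : ℝ => α * ((L / (P : ℝ) + 1) ^ 2 + L ^ 2 / (P : ℝ) ^ 2
        - 2 * (L / (P : ℝ)) * (L / (P : ℝ) + 1) * (1 - α⁻¹) ^ ((P : ℝ) / 2))))
    ∧ (P = 2 → ∃ b d : ℝ, ∀ α ∈ Set.Ici (1 : ℝ),
        α * ((L / (P : ℝ) + 1) ^ 2 + L ^ 2 / (P : ℝ) ^ 2
          - 2 * (L / (P : ℝ)) * (L / (P : ℝ) + 1) * (1 - α⁻¹) ^ ((P : ℝ) / 2)) = b * α + d)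
    ∧ (3 ≤ P → ConcaveOn ℝ (Set.Ici (1 : ℝ))
      (fun α : ℝ => α * ((L / (P : ℝ) + 1) ^ 2 + L ^ 2 / (P : ℝ) ^ 2
        - 2 * (L / (P : ℝ)) * (L / (P : ℝ) + 1) * (1 - α⁻¹) ^ ((P : ℝ) / 2)))) := by
  refine ⟨?_, ?_, ?_⟩
  · -- P = 1 : convex
    rintro rfl
    set C : ℝ := (L / (1:ℕ) + 1) ^ 2 + L ^ 2 / ((1:ℕ):ℝ) ^ 2 with hC
    set K : ℝ := 2 * (L / ((1:ℕ):ℝ)) * (L / ((1:ℕ):ℝ) + 1) with hK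
    have hp : (0:ℝ) < ((1:ℕ):ℝ) / 2 := by norm_num
    obtain ⟨h1, h2, h3⟩ := key (((1:ℕ):ℝ)/2) C K hp
    refine convexOn_of_hasDerivWithinAt2_nonneg (convex_Ici 1) h1 h2 h3 ?_
    intro x hx
    rw [interior_Ici] at hx
    have hb : 0 < 1 - x⁻¹ := by
      have : x⁻¹ < 1 := inv_lt_one_of_one_lt₀ hx
      linarith
    have hK0 : 0 < K := by
      rw [hK]; push_cast; nlinarith
    have hpow : (0:ℝ) < (1 - x⁻¹) ^ (((1:ℕ):ℝ)/2 - 2) := Real.rpow_pos_of_pos hb _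
    have hx3 : (0:ℝ) < (x ^ 3)⁻¹ := by
      have hx1 : (1:ℝ) < x := hx
      have hx0 : (0:ℝ) < x := by linarith
      positivity
    have hpp : (((1:ℕ):ℝ)/2) * (((1:ℕ):ℝ)/2 - 1) = -(1/4) := by push_cast; ring
    rw [hpp]
    nlinarith [mul_pos (mul_pos hK0 hpow) hx3]
  · -- P = 2 : affine
    rintro rfl
    refine ⟨(L / ((2:ℕ):ℝ) + 1) ^ 2 + L ^ 2 / ((2:ℕ):ℝ) ^ 2
      - 2 * (L / ((2:ℕ):ℝ)) * (L / ((2:ℕ):ℝ) + 1),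
      2 * (L / ((2:ℕ):ℝ)) * (L / ((2:ℕ):ℝ) + 1), ?_⟩
    intro α hα
    have hα0 : α ≠ 0 := by
      have h1 : (1:ℝ) ≤ α := hα
      intro h; rw [h] at h1; linarith
    have h2 : ((2:ℕ):ℝ) / 2 = 1 := by norm_num
    rw [h2, Real.rpow_one]
    field_simp
    ring
  · -- P ≥ 3 : concave
    intro hP3
    set C : ℝ := (L / (P:ℝ) + 1) ^ 2 + L ^ 2 / (P:ℝ) ^ 2 with hC
    set K : ℝ := 2 * (L / (P:ℝ)) * (L / (P:ℝ) + 1) with hK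
    have hPpos : (0:ℝ) < (P:ℝ) := by exact_mod_cast hP
    have hp : (0:ℝ) < (P:ℝ) / 2 := by positivity
    obtain ⟨h1, h2, h3⟩ := key ((P:ℝ)/2) C K hp
    refine concaveOn_of_hasDerivWithinAt2_nonpos (convex_Ici 1) h1 h2 h3 ?_
    intro x hx
    rw [interior_Ici] at hx
    have hb : 0 < 1 - x⁻¹ := by
      have : x⁻¹ < 1 := inv_lt_one_of_one_lt₀ hx
      linarith
    have hK0 : 0 < K := by
      have hd : 0 < L / (P:ℝ) := div_pos hL hPpos
      rw [hK]; nlinarith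
    have hpow : (0:ℝ) < (1 - x⁻¹) ^ ((P:ℝ)/2 - 2) := Real.rpow_pos_of_pos hb _
    have hx3 : (0:ℝ) < (x ^ 3)⁻¹ := by
      have hx1 : (1:ℝ) < x := hx
      have hx0 : (0:ℝ) < x := by linarith
      positivity
    have hP3' : (3:ℝ) ≤ (P:ℝ) := by exact_mod_cast hP3
    have hpp : 0 < ((P:ℝ)/2) * ((P:ℝ)/2 - 1) := by nlinarith
    nlinarith [mul_pos (mul_pos (mul_pos hK0 hpp) hpow) hx3]
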